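/- Let f : ℂ → ℂ be an entire function (holomorphic on all of ℂ) that is not a polynomial. Then for every r > 0 and every R > 0 there exists (x,y) ∈ ℂ² with max{|x|,|y|} ≥ R such that the Gaussian measure of the set {t ∈ ℂ : |x + t·f(y)| < r} is at least γ({t ∈ ℂ : |t| ≤ 1}). (That is, the family of maps π_t(x,y) = x + t·f(y), parametrized by t in ℂ with the Gaussian measure, is not a spreading family.) -/

import Mathlib

open MeasureTheory Polynomial

/-- The standard Gaussian probability measure on ℂ ≅ ℝ²:
    γ(U) = (1/(2π)) ∫_U e^{−|w|²/2} dλ(w). -/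
noncomputable def gaussianMeasureC : Measure ℂ :=
  MeasureTheory.volume.withDensity
    (fun w => ENNReal.ofReal ((2 * Real.pi)⁻¹ * Real.exp (-‖w‖ ^ 2 / 2)))

open Filter Set Metric Function in
/-- An entire function with polynomial growth is a polynomial. -/
lemma entire_poly_growth : ∀ (n : ℕ) (C : ℝ) (f : ℂ → ℂ), Differentiable ℂ f →
    (∀ z, ‖f z‖ ≤ C * (1 + ‖z‖) ^ n) → ∃ p : Polynomial ℂ, ∀ z, f z = p.eval z := by
  intro n
  induction n with
  | zero =>
    intro C f hf hb
    have hbd : Bornology.IsBounded (Set.range f) := by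
      rw [isBounded_iff_forall_norm_le]
      exact ⟨C, by rintro _ ⟨z, rfl⟩; simpa using hb z⟩
    refine ⟨Polynomial.C (f 0), fun z => ?_⟩
    simp [hf.apply_eq_apply_of_bounded hbd z 0]
  | succ n ih =>
    intro C f hf hb
    have hC : 0 ≤ C := le_trans (norm_nonneg (f 0)) (by simpa using hb 0)
    set g := dslope f 0 with hg_def
    have hg : Differentiable ℂ g := by
      rw [← differentiableOn_univ]
      exact (Complex.differentiableOn_dslope Filter.univ_mem).2 hf.differentiableOn
    obtain ⟨M, hM⟩ := (isCompact_closedBall (0:ℂ) 1).exists_bound_of_continuousOn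
      hg.continuous.continuousOn
    set C' := max M (3 * C) with hC'_def
    have hC'0 : 0 ≤ C' :=
      le_trans (le_trans (norm_nonneg (g 0)) (hM 0 (by simp))) (le_max_left _ _)
    have hgb : ∀ z, ‖g z‖ ≤ C' * (1 + ‖z‖) ^ n := by
      intro z
      have h1 : (1:ℝ) ≤ (1 + ‖z‖) ^ n := one_le_pow₀ (by linarith [norm_nonneg z])
      rcases le_or_gt ‖z‖ 1 with hz | hz
      · calc ‖g z‖ ≤ M := hM z (by simpa using hz)
          _ ≤ C' := le_max_left _ _
          _ = C' * 1 := (mul_one _).symm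
          _ ≤ C' * (1 + ‖z‖) ^ n := by nlinarith
      · have hz0 : z ≠ 0 := by
          intro h; rw [h] at hz; simp at hz; linarith
        have hzpos : (0:ℝ) < ‖z‖ := by linarith
        have key : ‖z‖ * ‖g z‖ = ‖f z - f 0‖ := by
          rw [← sub_smul_dslope f 0 z, norm_smul, sub_zero]
        have hf0 : ‖f 0‖ ≤ C := by simpa using hb 0
        have hfz : ‖f z‖ ≤ C * ((1 + ‖z‖) ^ n * (1 + ‖z‖)) := by
          have := hb z; rwa [pow_succ] at this
        have hsub : ‖f z - f 0‖ ≤ C * ((1 + ‖z‖) ^ n * (1 + ‖z‖)) + C :=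
          le_trans (norm_sub_le _ _) (add_le_add hfz hf0)
        have h3C : 3 * C ≤ C' := le_max_right _ _
        have hA : ‖z‖ * ‖g z‖ ≤ C * ((1 + ‖z‖) ^ n * (1 + ‖z‖)) + C := by
          rw [key]; exact hsub
        have hPpos : (0:ℝ) < (1 + ‖z‖) ^ n := by positivity
        rw [← mul_le_mul_iff_right₀ hzpos]
        calc ‖z‖ * ‖g z‖ ≤ C * ((1 + ‖z‖) ^ n * (1 + ‖z‖)) + C := hA
          _ ≤ 3 * C * ((1 + ‖z‖) ^ n) * ‖z‖ := by
              have e1 : (1 + ‖z‖) ^ n ≤ (1 + ‖z‖) ^ n * ‖z‖ := by nlinarith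
              have e2 : (1:ℝ) ≤ (1 + ‖z‖) ^ n * ‖z‖ := by nlinarith
              have e3 := mul_le_mul_of_nonneg_left e1 hC
              have e4 := mul_le_mul_of_nonneg_left e2 hC
              nlinarith
          _ ≤ C' * ((1 + ‖z‖) ^ n) * ‖z‖ := by
              have := mul_le_mul_of_nonneg_right
                (mul_le_mul_of_nonneg_right h3C hPpos.le) hzpos.le
              linarith
          _ = ‖z‖ * (C' * (1 + ‖z‖) ^ n) := by ring
    obtain ⟨p, hp⟩ := ih C' g hg hgb
    refine ⟨Polynomial.C (f 0) + Polynomial.X * p, fun z => ?_⟩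
    have hds := sub_smul_dslope f 0 z
    rw [sub_zero, smul_eq_mul] at hds
    simp only [Polynomial.eval_add, Polynomial.eval_mul, Polynomial.eval_C, Polynomial.eval_X,
      ← hp z]
    linear_combination -hds

open Filter Set Metric Function Topology in
/-- A non-polynomial entire function gets arbitrarily small arbitrarily far out. -/
lemma exists_small_far (f : ℂ → ℂ) (hf : Differentiable ℂ f)
    (hnp : ¬ ∃ p : Polynomial ℂ, ∀ z : ℂ, f z = p.eval z)
    {r R : ℝ} (hr : 0 < r) (hR : 0 < R) :
    ∃ y : ℂ, R ≤ ‖y‖ ∧ ‖f y‖ < r := by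
  by_contra hcon
  push_neg at hcon
  apply hnp
  have hRi : 0 < R⁻¹ := inv_pos.2 hR
  set s := Metric.ball (0:ℂ) R⁻¹ with hs_def
  have hs : s ∈ 𝓝 (0:ℂ) := Metric.ball_mem_nhds _ hRi
  have hmem : ∀ z : ℂ, z ∈ s \ {0} → R ≤ ‖z⁻¹‖ := by
    intro z hz
    have hz0 : z ≠ 0 := hz.2
    have hlt : ‖z‖ < R⁻¹ := by simpa [hs_def] using hz.1
    rw [norm_inv]
    calc R = (R⁻¹)⁻¹ := (inv_inv R).symm
      _ ≤ ‖z‖⁻¹ := by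
        apply inv_anti₀ (norm_pos_iff.2 hz0) hlt.le
  have hfne : ∀ z ∈ s \ {0}, f z⁻¹ ≠ 0 ∧ r ≤ ‖f z⁻¹‖ := by
    intro z hz
    have h2 := hcon z⁻¹ (hmem z hz)
    exact ⟨fun h => by rw [h] at h2; simp at h2; linarith, h2⟩
  set g : ℂ → ℂ := fun z => (f z⁻¹)⁻¹ with hg_def
  have hgd : DifferentiableOn ℂ g (s \ {0}) := by
    intro z hz
    have hz0 : z ≠ 0 := hz.2
    exact ((DifferentiableAt.comp z hf.differentiableAt
      (differentiableAt_inv hz0)).inv (hfne z hz).1).differentiableWithinAt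
  have hbdd : BddAbove (norm ∘ g '' (s \ {0})) := by
    refine ⟨r⁻¹, ?_⟩
    rintro x ⟨z, hz, rfl⟩
    simp only [Function.comp_apply, hg_def, norm_inv]
    exact inv_anti₀ hr (hfne z hz).2
  set L := limUnder (𝓝[≠] (0:ℂ)) g with hL_def
  have hh : DifferentiableOn ℂ (update g 0 L) s :=
    Complex.differentiableOn_update_limUnder_of_bddAbove hs hgd hbdd
  set h := update g 0 L with hh_def
  have hA : AnalyticAt ℂ h 0 := hh.analyticAt hs
  have hsd : s \ {0} ∈ 𝓝[≠] (0:ℂ) := diff_mem_nhdsWithin_compl hs {0}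
  have hne : ∀ᶠ z in 𝓝[≠] (0:ℂ), h z ≠ 0 := by
    filter_upwards [hsd] with z hz
    have hz0 : z ≠ 0 := hz.2
    rw [hh_def, update_of_ne hz0]
    exact inv_ne_zero (hfne z hz).1
  have hord : analyticOrderAt h 0 ≠ ⊤ := by
    intro htop
    have hcontra := analyticOrderAt_eq_top.1 htop
    have := hne.and (eventually_nhdsWithin_of_eventually_nhds hcontra)
    rcases this.exists with ⟨z, hz1, hz2⟩
    exact hz1 hz2
  obtain ⟨n, hn⟩ := ENat.ne_top_iff_exists.1 hord
  obtain ⟨k, hk_an, hk0, hk_eq⟩ := (hA.analyticOrderAt_eq_natCast (n := n)).1 hn.symm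
  have hcpos : (0:ℝ) < ‖k 0‖ / 2 := by
    have : 0 < ‖k 0‖ := norm_pos_iff.2 hk0
    linarith
  set c := ‖k 0‖ / 2 with hc_def
  have hk_lb : ∀ᶠ z in 𝓝 (0:ℂ), c ≤ ‖k z‖ := by
    have hball := hk_an.continuousAt (Metric.ball_mem_nhds (k 0) hcpos)
    filter_upwards [hball] with z hz
    have : ‖k z - k 0‖ < c := by
      simpa [dist_eq_norm, hc_def] using hz
    have := norm_sub_norm_le (k 0) (k z)
    have h2 : ‖k 0 - k z‖ < c := by rwa [norm_sub_rev] at this ⊢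
    calc c = ‖k 0‖ - c := by rw [hc_def]; ring
      _ ≤ ‖k 0‖ - ‖k 0 - k z‖ := by linarith
      _ ≤ ‖k z‖ := by
        have := norm_sub_norm_le (k 0) (k z)
        linarith [norm_sub_norm_le (k 0) (k z)]
  have hev : ∀ᶠ z in 𝓝[≠] (0:ℂ),
      z ∈ s \ {0} ∧ h z = z ^ n • k z ∧ c ≤ ‖k z‖ := by
    filter_upwards [hsd, eventually_nhdsWithin_of_eventually_nhds hk_eq,
      eventually_nhdsWithin_of_eventually_nhds hk_lb] with z h1 h2 h3
    exact ⟨h1, by simpa using h2, h3⟩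
  obtain ⟨δ, hδ0, hδ⟩ : ∃ δ > 0, ∀ z : ℂ, ‖z‖ < δ → z ≠ 0 →
      z ∈ s \ {0} ∧ h z = z ^ n • k z ∧ c ≤ ‖k z‖ := by
    have h2 := eventually_nhdsWithin_iff.mp hev
    rw [Metric.eventually_nhds_iff] at h2
    obtain ⟨ε, hε, hball⟩ := h2
    exact ⟨ε, hε, fun z hz hz0 => hball (by simpa [dist_zero_right] using hz) hz0⟩
  have hfar : ∀ w : ℂ, δ⁻¹ < ‖w‖ → ‖f w‖ ≤ c⁻¹ * ‖w‖ ^ n := by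
    intro w hw
    have hw0 : w ≠ 0 := by
      intro hh0
      rw [hh0, norm_zero] at hw
      exact absurd hw (not_lt.2 (inv_pos.2 hδ0).le)
    have hwpos : (0:ℝ) < ‖w‖ := norm_pos_iff.2 hw0
    have hzlt : ‖w⁻¹‖ < δ := by
      rw [norm_inv]
      calc ‖w‖⁻¹ < (δ⁻¹)⁻¹ := by
            apply inv_strictAnti₀ (inv_pos.2 hδ0) hw
        _ = δ := inv_inv δ
    obtain ⟨hzs, hzh, hzk⟩ := hδ w⁻¹ hzlt (inv_ne_zero hw0)
    have hg_eq : h w⁻¹ = (f w)⁻¹ := by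
      rw [hh_def, update_of_ne (inv_ne_zero hw0), hg_def]
      simp [inv_inv]
    have hfw : f w ≠ 0 := by
      have := (hfne w⁻¹ hzs).1
      rwa [inv_inv] at this
    have heq : (f w)⁻¹ = (w⁻¹) ^ n * k w⁻¹ := by
      rw [← hg_eq, hzh, smul_eq_mul]
    have hkpos : (0:ℝ) < ‖k w⁻¹‖ := lt_of_lt_of_le hcpos hzk
    have hnorm : ‖f w‖⁻¹ = (‖w‖⁻¹) ^ n * ‖k w⁻¹‖ := by
      rw [← norm_inv, heq, norm_mul, norm_pow, norm_inv]
    have hfpos : (0:ℝ) < ‖f w‖ := norm_pos_iff.2 hfw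
    have : ‖f w‖ = ‖w‖ ^ n * ‖k w⁻¹‖⁻¹ := by
      rw [← inv_inv ‖f w‖, hnorm, mul_inv, inv_pow, inv_inv]
    rw [this]
    have hk_inv : ‖k w⁻¹‖⁻¹ ≤ c⁻¹ := inv_anti₀ hcpos hzk
    calc ‖w‖ ^ n * ‖k w⁻¹‖⁻¹ ≤ ‖w‖ ^ n * c⁻¹ :=
          mul_le_mul_of_nonneg_left hk_inv (by positivity)
      _ = c⁻¹ * ‖w‖ ^ n := mul_comm _ _
  obtain ⟨M, hM⟩ := (isCompact_closedBall (0:ℂ) δ⁻¹).exists_bound_of_continuousOn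
    hf.continuous.continuousOn
  set C := max M c⁻¹ with hC_def
  have hC0 : 0 ≤ C := le_trans (le_trans (norm_nonneg (f 0))
    (hM 0 (by simp [(inv_pos.2 hδ0).le]))) (le_max_left _ _)
  apply entire_poly_growth n C f hf
  intro w
  have h1 : (1:ℝ) ≤ (1 + ‖w‖) ^ n := one_le_pow₀ (by linarith [norm_nonneg w])
  rcases le_or_gt ‖w‖ δ⁻¹ with hw | hw
  · calc ‖f w‖ ≤ M := hM w (by simpa using hw)
      _ ≤ C := le_max_left _ _
      _ = C * 1 := (mul_one _).symm
      _ ≤ C * (1 + ‖w‖) ^ n := by nlinarith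
  · have := hfar w hw
    calc ‖f w‖ ≤ c⁻¹ * ‖w‖ ^ n := this
      _ ≤ C * (1 + ‖w‖) ^ n := by
        apply mul_le_mul (le_max_right _ _)
          (pow_le_pow_left₀ (norm_nonneg w) (by linarith) n) (by positivity) hC0

theorem stmt12 (f : ℂ → ℂ) (hf : Differentiable ℂ f)
    (hnp : ¬ ∃ p : Polynomial ℂ, ∀ z : ℂ, f z = p.eval z) :
    ∀ r : ℝ, 0 < r → ∀ R : ℝ, 0 < R → ∃ x y : ℂ,
      R ≤ max ‖x‖ ‖y‖ ∧
      gaussianMeasureC {t : ℂ | ‖t‖ ≤ 1} ≤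
        gaussianMeasureC {t : ℂ | ‖x + t * f y‖ < r} := by
  intro r hr R hR
  obtain ⟨y, hy, hfy⟩ := exists_small_far f hf hnp hr hR
  refine ⟨0, y, ?_, ?_⟩
  · exact le_trans hy (le_max_right _ _)
  · apply measure_mono
    intro t ht
    simp only [Set.mem_setOf_eq] at ht ⊢
    rw [zero_add, norm_mul]
    calc ‖t‖ * ‖f y‖ ≤ 1 * ‖f y‖ :=
          mul_le_mul_of_nonneg_right ht (norm_nonneg _)
      _ = ‖f y‖ := one_mul _
      _ < r := hfy
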